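/- Let c₀ > 0 and δ > 0. Let f : ℝ → ℝ be continuous and 2π-periodic with f(0) = 0, ∫_{−π}^{π} f(x) dx ≥ c₀, and ∫_{−π}^{π} |f(x) − f̄|² dx < δ, where f̄ = (2π)^{−1} ∫_{−π}^{π} f(x) dx. Then for every α > 1/2 there is a constant c(α,c₀) > 0, depending only on α and c₀, such that ‖f‖_{Ḣ^α(T)} ≥ c(α,c₀) δ^{1/2−α}. -/

import Mathlib

open Real MeasureTheory Filter Topology AddCircle
open scoped ENNReal NNReal
set_option maxHeartbeats 1000000

noncomputable section


open Real MeasureTheory Filter Topology AddCircle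
open scoped ENNReal NNReal

noncomputable section

/-- Fourier coefficients of a `2π`-periodic function on `ℝ` (a function on the circle `T`):
`f̂(k) = (2π)⁻¹ ∫_{-π}^{π} e^{-ikx} f(x) dx`. -/
def ccoef (f : ℝ → ℝ) (k : ℤ) : ℂ :=
  (2 * π : ℝ)⁻¹ * ∫ x in (-π)..π, Complex.exp (-Complex.I * (((k : ℝ) * x : ℝ) : ℂ)) * (f x : ℂ)

/-- Homogeneous Sobolev norm on the circle (valued in `ℝ≥0∞`):
`‖f‖_{Ḣ^α(T)}² = 2π Σ_{k ≠ 0} |k|^{2α} |f̂(k)|²`. -/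
def sobCircle (α : ℝ) (f : ℝ → ℝ) : ℝ≥0∞ :=
  (ENNReal.ofReal (2 * π) *
    ∑' k : ℤ, (if k = 0 then 0 else
      ENNReal.ofReal (|(k : ℝ)| ^ (2 * α)) * (‖ccoef f k‖₊ : ℝ≥0∞) ^ 2)) ^ (1/2 : ℝ)

private lemma mySummable_mul_of_sq {ι : Type*} {a b : ι → ℝ}
    (ha : Summable fun i => a i ^ 2) (hb : Summable fun i => b i ^ 2) :
    Summable fun i => a i * b i := by
  apply Summable.of_abs
  apply Summable.of_nonneg_of_le (fun i => abs_nonneg _)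
    (fun i => ?_) (((ha.add hb).div_const 2))
  rw [abs_mul]
  nlinarith [sq_nonneg (|a i| - |b i|), sq_abs (a i), sq_abs (b i), abs_nonneg (a i),
    abs_nonneg (b i)]

private lemma myTsum_cs {ι : Type*} {a b : ι → ℝ}
    (ha : Summable fun i => a i ^ 2) (hb : Summable fun i => b i ^ 2) :
    ∑' i, a i * b i ≤ Real.sqrt (∑' i, a i ^ 2) * Real.sqrt (∑' i, b i ^ 2) := by
  refine Summable.tsum_le_of_sum_le (mySummable_mul_of_sq ha hb) (fun s => ?_)
  calc ∑ i ∈ s, a i * b i ≤ Real.sqrt (∑ i ∈ s, a i ^ 2) * Real.sqrt (∑ i ∈ s, b i ^ 2) :=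
        Real.sum_mul_le_sqrt_mul_sqrt s a b
    _ ≤ Real.sqrt (∑' i, a i ^ 2) * Real.sqrt (∑' i, b i ^ 2) := by
        gcongr <;> exact Summable.sum_le_tsum s (fun i _ => sq_nonneg _) ‹_›

private lemma mySummable_update {M : Type*} [AddCommGroup M] [TopologicalSpace M]
    [IsTopologicalAddGroup M] {f g : ℤ → M} (h : ∀ k, k ≠ 0 → f k = g k) (hg : Summable g) :
    Summable f := by
  have : f = (fun k => if k = 0 then f 0 - g 0 else 0) + g := by
    funext k
    by_cases hk : k = 0
    · simp [hk]
    · simp [hk, h k hk]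
  rw [this]
  refine (summable_of_ne_finset_zero (s := {0}) ?_).add hg
  intro k hk
  simp only [Finset.mem_singleton] at hk
  simp [hk]

private lemma myTail_summable {p : ℝ} (hp : 1 < p) (K : ℕ) :
    Summable fun n : ℕ => ((n + K : ℕ) : ℝ) ^ (-p) := by
  have h : Summable fun n : ℕ => (n : ℝ) ^ (-p) :=
    Real.summable_nat_rpow.mpr (by linarith)
  refine (h.comp_injective (add_left_injective K)).congr (fun n => ?_)
  show ((n + K : ℕ) : ℝ) ^ (-p) = _
  norm_cast

private lemma myTail (p : ℝ) (hp : 1 < p) (N : ℕ) (hN : 1 ≤ N) :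
    ∑' n : ℕ, ((n + (N + 1) : ℕ) : ℝ) ^ (-p) ≤ (N : ℝ) ^ (1 - p) / (p - 1) := by
  have hNpos : (0 : ℝ) < N := by exact_mod_cast hN
  refine Summable.tsum_le_of_sum_le (myTail_summable hp (N + 1)) (fun s => ?_)
  obtain ⟨M, hM⟩ := s.exists_nat_subset_range
  have h1 : ∑ i ∈ s, ((i + (N + 1) : ℕ) : ℝ) ^ (-p)
      ≤ ∑ i ∈ Finset.range M, ((i + (N + 1) : ℕ) : ℝ) ^ (-p) :=
    Finset.sum_le_sum_of_subset_of_nonneg hM (fun i _ _ => by positivity)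
  have hanti : AntitoneOn (fun x : ℝ => x ^ (-p)) (Set.Icc (N : ℝ) ((N : ℝ) + M)) := by
    intro x hx y hy hxy
    exact Real.rpow_le_rpow_of_nonpos (lt_of_lt_of_le hNpos hx.1) hxy (by linarith)
  have h2 : ∑ i ∈ Finset.range M, (fun x : ℝ => x ^ (-p)) ((N : ℝ) + (i + 1 : ℕ))
      ≤ ∫ x in (N : ℝ)..(N : ℝ) + M, x ^ (-p) := hanti.sum_le_integral
  have h3 : ∫ x in (N : ℝ)..(N : ℝ) + M, x ^ (-p)
      = (((N : ℝ) + M) ^ (-p + 1) - (N : ℝ) ^ (-p + 1)) / (-p + 1) := by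
    apply integral_rpow
    refine Or.inr ⟨by linarith, ?_⟩
    rw [Set.uIcc_of_le (by linarith [Nat.cast_nonneg (α := ℝ) M])]
    intro h
    exact absurd h.1 (by linarith)
  have h4 : (((N : ℝ) + M) ^ (-p + 1) - (N : ℝ) ^ (-p + 1)) / (-p + 1)
      ≤ (N : ℝ) ^ (1 - p) / (p - 1) := by
    have e : (((N : ℝ) + M) ^ (-p + 1) - (N : ℝ) ^ (-p + 1)) / (-p + 1)
        = ((N : ℝ) ^ (-p + 1) - ((N : ℝ) + M) ^ (-p + 1)) / (p - 1) := by
      rw [div_eq_div_iff (by linarith) (by linarith)]; ring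
    rw [e, show (-p + 1) = 1 - p by ring]
    gcongr
    · have : (0:ℝ) ≤ ((N : ℝ) + M) ^ (1 - p) := by positivity
      linarith
  calc ∑ i ∈ s, ((i + (N + 1) : ℕ) : ℝ) ^ (-p) ≤ _ := h1
    _ = ∑ i ∈ Finset.range M, (fun x : ℝ => x ^ (-p)) ((N : ℝ) + (i + 1 : ℕ)) := by
        refine Finset.sum_congr rfl (fun i _ => ?_)
        push_cast
        ring_nf
    _ ≤ _ := h2
    _ = _ := h3
    _ ≤ _ := h4

private instance myFact : Fact (0 < 2 * π) := ⟨by positivity⟩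

private lemma myFourierApply (k : ℤ) (x : ℝ) :
    @fourier (2 * π) (-k) (x : AddCircle (2 * π)) =
      Complex.exp (-Complex.I * (((k : ℝ) * x : ℝ) : ℂ)) := by
  rw [fourier_coe_apply]
  congr 1
  have hπ : (π : ℂ) ≠ 0 := Complex.ofReal_ne_zero.mpr Real.pi_ne_zero
  push_cast
  field_simp

private lemma myExpInt (k : ℤ) (hk : k ≠ 0) :
    (∫ x in (-π)..π, Complex.exp (-Complex.I * (((k : ℝ) * x : ℝ) : ℂ))) = 0 := by
  have heq : ∀ x : ℝ, Complex.exp (-Complex.I * (((k : ℝ) * x : ℝ) : ℂ))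
      = Complex.exp ((-Complex.I * k) * x) := by
    intro x; congr 1; push_cast; ring
  have hc : (-Complex.I * k) ≠ 0 := by
    simp [Complex.I_ne_zero, Complex.ext_iff, hk]
  rw [intervalIntegral.integral_congr (fun x _ => heq x), integral_exp_mul_complex hc]
  have h1 : Complex.exp ((-Complex.I * k) * π)
      = Complex.exp ((-Complex.I * k) * (-π)) * Complex.exp (((-k : ℤ) : ℂ) * (2 * π * Complex.I)) := by
    rw [← Complex.exp_add]; congr 1; push_cast; ring
  have h2 : ((-π : ℝ) : ℂ) = -(π : ℂ) := by push_cast; ring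
  rw [h2, h1, Complex.exp_int_mul_two_pi_mul_I, mul_one, sub_self, zero_div]

private lemma myCont {f : ℝ → ℝ} (hf : Continuous f) {F : AddCircle (2 * π) → ℂ}
    (hF : ∀ x : ℝ, F x = f x) : Continuous F := by
  refine (QuotientAddGroup.isQuotientMap_mk _).continuous_iff.mpr ?_
  exact (Complex.continuous_ofReal.comp hf).congr (fun x => (hF x).symm)

private lemma myCoeff {f : ℝ → ℝ} {F : AddCircle (2 * π) → ℂ}
    (hF : ∀ x : ℝ, F x = f x) (k : ℤ) :
    fourierCoeff F k = ccoef f k := by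
  rw [fourierCoeff_eq_intervalIntegral F k (-π), show -π + 2 * π = π by ring]
  unfold ccoef
  rw [intervalIntegral.integral_congr (g := fun x : ℝ =>
    Complex.exp (-Complex.I * (((k : ℝ) * x : ℝ) : ℂ)) * (f x : ℂ))
    (fun x _ => by rw [smul_eq_mul, myFourierApply, hF])]
  rw [Complex.real_smul]
  push_cast
  ring

private lemma myCoeffG {f : ℝ → ℝ} {F : AddCircle (2 * π) → ℂ}
    (hf : Continuous f) (hF : ∀ x : ℝ, F x = f x) (m : ℝ) {k : ℤ} (hk : k ≠ 0) :
    fourierCoeff (fun z => F z - (m : ℂ)) k = ccoef f k := by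
  rw [← myCoeff hF k]
  rw [fourierCoeff_eq_intervalIntegral _ k (-π), fourierCoeff_eq_intervalIntegral F k (-π),
    show -π + 2 * π = π by ring]
  congr 1
  have hcont : Continuous fun x : ℝ => Complex.exp (-Complex.I * (((k : ℝ) * x : ℝ) : ℂ)) := by
    fun_prop
  have e1 : ∀ x : ℝ, @fourier (2 * π) (-k) (x : AddCircle (2 * π)) • (F x - (m : ℂ))
      = Complex.exp (-Complex.I * (((k : ℝ) * x : ℝ) : ℂ)) * (f x : ℂ)
        - Complex.exp (-Complex.I * (((k : ℝ) * x : ℝ) : ℂ)) * (m : ℂ) := by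
    intro x; rw [smul_eq_mul, myFourierApply, hF, mul_sub]
  have e2 : ∀ x : ℝ, @fourier (2 * π) (-k) (x : AddCircle (2 * π)) • F x
      = Complex.exp (-Complex.I * (((k : ℝ) * x : ℝ) : ℂ)) * (f x : ℂ) := by
    intro x; rw [smul_eq_mul, myFourierApply, hF]
  have A : IntervalIntegrable (fun x : ℝ =>
      Complex.exp (-Complex.I * (((k : ℝ) * x : ℝ) : ℂ)) * (f x : ℂ)) volume (-π) π := by
    apply Continuous.intervalIntegrable
    exact hcont.mul (Complex.continuous_ofReal.comp hf)
  have B : IntervalIntegrable (fun x : ℝ =>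
      Complex.exp (-Complex.I * (((k : ℝ) * x : ℝ) : ℂ)) * (m : ℂ)) volume (-π) π :=
    (hcont.mul continuous_const).intervalIntegrable _ _
  rw [intervalIntegral.integral_congr (fun x _ => e1 x),
    intervalIntegral.integral_congr (fun x _ => e2 x),
    intervalIntegral.integral_sub A B,
    intervalIntegral.integral_mul_const, myExpInt k hk, zero_mul, sub_zero]

private lemma myCoeff0 (f : ℝ → ℝ) :
    ccoef f 0 = (((2 * π)⁻¹ * ∫ x in (-π)..π, f x : ℝ) : ℂ) := by
  unfold ccoef
  rw [intervalIntegral.integral_congr (g := fun x : ℝ => (f x : ℂ)) (fun x _ => by norm_num)]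
  rw [intervalIntegral.integral_ofReal]
  push_cast
  ring

private lemma myParseval {f : ℝ → ℝ} (hf : Continuous f) {F : AddCircle (2 * π) → ℂ}
    (hFc : Continuous F) (hF : ∀ x : ℝ, F x = f x) (m : ℝ) :
    ∑' k : ℤ, ‖fourierCoeff (fun z => F z - (m : ℂ)) k‖ ^ 2
      = (2 * π)⁻¹ * ∫ x in (-π)..π, (f x - m) ^ 2 := by
  set G : C(AddCircle (2 * π), ℂ) := ⟨fun z => F z - (m : ℂ), hFc.sub continuous_const⟩ with hGdef
  have hG : (fun z : AddCircle (2 * π) => F z - (m : ℂ)) = ⇑G := rfl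
  rw [hG]
  have h1 := tsum_sq_fourierCoeff (ContinuousMap.toLp 2 haarAddCircle ℂ G)
  simp_rw [fourierCoeff_toLp] at h1
  rw [h1]
  have h2 : ∫ t : AddCircle (2 * π), ‖(ContinuousMap.toLp 2 haarAddCircle ℂ G) t‖ ^ 2 ∂haarAddCircle
      = ∫ t : AddCircle (2 * π), ‖G t‖ ^ 2 ∂haarAddCircle := by
    apply integral_congr_ae
    filter_upwards [ContinuousMap.coeFn_toLp (p := 2) (μ := haarAddCircle) (𝕜 := ℂ) G] with t ht
    rw [ht]
  rw [h2]
  have h3 : ∫ x in (-π)..(-π) + 2 * π, ‖G (x : AddCircle (2 * π))‖ ^ 2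
      = ∫ t : AddCircle (2 * π), ‖G t‖ ^ 2 := by
    exact AddCircle.intervalIntegral_preimage (2 * π) (-π) (fun z => ‖G z‖ ^ 2)
  rw [AddCircle.volume_eq_smul_haarAddCircle, integral_smul_measure,
    ENNReal.toReal_ofReal (by positivity : (0:ℝ) ≤ 2 * π), smul_eq_mul] at h3
  have h4 : ∀ x : ℝ, ‖G (x : AddCircle (2 * π))‖ ^ 2 = (f x - m) ^ 2 := by
    intro x
    have : G (x : AddCircle (2 * π)) = ((f x - m : ℝ) : ℂ) := by
      show F x - (m : ℂ) = _
      rw [hF]; push_cast; ring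
    rw [this, Complex.norm_real, Real.norm_eq_abs, sq_abs]
  rw [intervalIntegral.integral_congr (fun x _ => h4 x), show -π + 2 * π = π by ring] at h3
  have hpi : (2 * π) ≠ 0 := by positivity
  rw [h3, inv_mul_cancel_left₀ hpi]

private lemma myPointwise {f : ℝ → ℝ} {F : AddCircle (2 * π) → ℂ} (hFc : Continuous F)
    (hF : ∀ x : ℝ, F x = f x) (hf0 : f 0 = 0)
    (hsum : Summable fun k => ccoef f k) : ∑' k : ℤ, ccoef f k = 0 := by
  set Fc : C(AddCircle (2 * π), ℂ) := ⟨F, hFc⟩ with hFcdef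
  have hc : ∀ k, fourierCoeff (⇑Fc) k = ccoef f k := fun k => myCoeff hF k
  have hsum' : Summable (fourierCoeff (⇑Fc)) := hsum.congr (fun k => (hc k).symm)
  have h := has_pointwise_sum_fourier_series_of_summable hsum' (0 : AddCircle (2 * π))
  have h0 : Fc (0 : AddCircle (2 * π)) = 0 := by
    show F (0 : AddCircle (2 * π)) = 0
    rw [show (0 : AddCircle (2 * π)) = ((0 : ℝ) : AddCircle (2 * π)) by norm_cast, hF, hf0]
    norm_num
  rw [h0] at h
  have h' : HasSum (fun k => ccoef f k) 0 := by
    refine h.congr_fun (fun k => ?_)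
    rw [fourier_eval_zero, smul_eq_mul, mul_one, hc]
  exact h'.tsum_eq

/-- A continuous `2π`-periodic function with `f(0) = 0`, mean bounded below by
`c₀ > 0`, and small `L²`-oscillation `∫|f - f̄|² < δ` has a large `Ḣ^α` norm for `α > 1/2`:
`‖f‖_{Ḣ^α(T)} ≥ c(α,c₀) δ^{1/2-α}` with `c(α,c₀) > 0` depending only on `α` and `c₀`. -/
theorem circle_pinned_oscillation_lower_bound
    (α c₀ : ℝ) (hα : 1/2 < α) (hc₀ : 0 < c₀) :
    ∃ c : ℝ, 0 < c ∧
      ∀ δ : ℝ, 0 < δ →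
      ∀ f : ℝ → ℝ, Continuous f → (∀ x : ℝ, f (x + 2 * π) = f x) →
        f 0 = 0 →
        c₀ ≤ ∫ x in (-π)..π, f x →
        (∫ x in (-π)..π, (f x - (2 * π)⁻¹ * ∫ y in (-π)..π, f y) ^ 2) < δ →
        ENNReal.ofReal (c * δ ^ (1/2 - α)) ≤ sobCircle α f := by
  classical
  have hπ := Real.pi_pos
  have h2α : 1 < 2 * α := by linarith
  have hAsum : Summable fun k : ℤ => (if k = 0 then 0 else |(k : ℝ)| ^ (-α)) ^ 2 := by
    refine (Real.summable_abs_int_rpow h2α).congr fun k => ?_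
    by_cases hk : k = 0
    · simp [hk, Real.zero_rpow (show -(2*α) ≠ 0 by intro h; nlinarith)]
    · rw [if_neg hk, ← Real.rpow_natCast (|(k:ℝ)| ^ (-α)) 2, ← Real.rpow_mul (abs_nonneg _)]
      congr 1
      push_cast
      ring
  set A : ℝ := ∑' k : ℤ, (if k = 0 then 0 else |(k : ℝ)| ^ (-α)) ^ 2 with hAdef
  have hA1 : 1 ≤ A := by
    calc (1:ℝ) = (if (1:ℤ) = 0 then 0 else |((1:ℤ):ℝ)| ^ (-α)) ^ 2 := by norm_num
      _ ≤ A := Summable.le_tsum hAsum 1 (fun k _ => sq_nonneg _)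
  have hsqA : 1 ≤ Real.sqrt A := by
    rw [show (1:ℝ) = Real.sqrt 1 by simp]
    exact Real.sqrt_le_sqrt hA1
  have hsqApos : 0 < Real.sqrt A := lt_of_lt_of_le one_pos hsqA
  set K : ℝ := Real.sqrt (2 / (2 * α - 1)) with hKdef
  have hKpos : 0 < K := Real.sqrt_pos.mpr (div_pos two_pos (by linarith))
  set δ₀ : ℝ := c₀ ^ 2 / (32 * π) with hδ₀def
  have hδ₀pos : 0 < δ₀ := by positivity
  set c₁ : ℝ := c₀ / (4 * π * K) * δ₀ ^ (α - 1/2) with hc₁def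
  set c₂ : ℝ := c₀ / (2 * π * Real.sqrt A) * δ₀ ^ (α - 1/2) with hc₂def
  have hc₁ : 0 < c₁ := mul_pos (div_pos hc₀ (by positivity)) (Real.rpow_pos_of_pos hδ₀pos _)
  have hc₂ : 0 < c₂ := mul_pos (div_pos hc₀ (by positivity)) (Real.rpow_pos_of_pos hδ₀pos _)
  refine ⟨min c₁ c₂, lt_min hc₁ hc₂, ?_⟩
  intro δ hδ f hf hper hf0 hmean hosc
  set u : ℤ → ℝ := fun k => if k = 0 then 0 else ‖ccoef f k‖ with hu
  set w : ℤ → ℝ := fun k => if k = 0 then 0 else |(k : ℝ)| ^ α * ‖ccoef f k‖ with hwdef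
  have hwnn : ∀ k, 0 ≤ w k := by
    intro k; rw [hwdef]; dsimp only; split
    · exact le_refl 0
    · positivity
  have hterm : ∀ k : ℤ, (if k = 0 then 0 else
      ENNReal.ofReal (|(k : ℝ)| ^ (2 * α)) * (‖ccoef f k‖₊ : ℝ≥0∞) ^ 2)
      = ENNReal.ofReal (w k ^ 2) := by
    intro k
    by_cases hk : k = 0
    · simp [hk, hwdef]
    · rw [if_neg hk]
      have h1 : (‖ccoef f k‖₊ : ℝ≥0∞) ^ 2 = ENNReal.ofReal (‖ccoef f k‖ ^ 2) := by
        rw [ENNReal.ofReal_pow (norm_nonneg _), ← coe_nnnorm, ENNReal.ofReal_coe_nnreal]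
      rw [h1, ← ENNReal.ofReal_mul (by positivity)]
      congr 1
      rw [hwdef]
      simp only [if_neg hk]
      rw [mul_pow, ← Real.rpow_natCast (|(k:ℝ)| ^ α) 2, ← Real.rpow_mul (abs_nonneg _)]
      congr 2
      push_cast
      ring
  unfold sobCircle
  rw [tsum_congr hterm]
  by_cases hwsum : Summable fun k : ℤ => w k ^ 2
  case neg =>
    have htop : ∑' k : ℤ, ENNReal.ofReal (w k ^ 2) = ⊤ := by
      by_contra hne
      apply hwsum
      have hs : Summable fun k : ℤ => (w k ^ 2).toNNReal :=
        ENNReal.tsum_coe_ne_top_iff_summable.mp hne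
      exact (NNReal.summable_coe.mpr hs).congr fun k => Real.coe_toNNReal _ (sq_nonneg _)
    rw [htop, ENNReal.mul_top (by rw [Ne, ENNReal.ofReal_eq_zero]; intro h; linarith),
      ENNReal.top_rpow_of_pos (by norm_num)]
    exact le_top
  case pos =>
  set S : ℝ := Real.sqrt (∑' k, w k ^ 2) with hSdef
  have hSnn : 0 ≤ S := Real.sqrt_nonneg _
  have hgoal : (ENNReal.ofReal (2*π) * ∑' k : ℤ, ENNReal.ofReal (w k ^ 2)) ^ (1/2:ℝ)
      = ENNReal.ofReal (Real.sqrt (2*π) * S) := by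
    rw [← ENNReal.ofReal_tsum_of_nonneg (fun k => sq_nonneg _) hwsum,
      ← ENNReal.ofReal_mul (by positivity),
      ENNReal.ofReal_rpow_of_nonneg (mul_nonneg (by positivity) (tsum_nonneg fun k => sq_nonneg _)) (by norm_num)]
    congr 1
    rw [← Real.sqrt_eq_rpow, Real.sqrt_mul (by positivity)]
  rw [hgoal]
  apply ENNReal.ofReal_le_ofReal
  have hreal : min c₁ c₂ * δ ^ (1/2 - α) ≤ S := by
    set m : ℝ := (2 * π)⁻¹ * ∫ y in (-π)..π, f y with hmdef
    have hm : c₀ / (2 * π) ≤ m := by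
      rw [hmdef, inv_mul_eq_div]
      gcongr
    have hmpos : 0 < m := lt_of_lt_of_le (by positivity) hm
    have hperC : Function.Periodic (fun x : ℝ => ((f x : ℝ) : ℂ)) (2 * π) := fun x =>
      congrArg Complex.ofReal (hper x)
    set F : AddCircle (2 * π) → ℂ := hperC.lift with hFdef
    have hF : ∀ x : ℝ, F x = f x := fun x => hperC.lift_coe x
    have hFc : Continuous F := myCont hf hF
    have huw : ∀ k, u k = (if k = 0 then 0 else |(k : ℝ)| ^ (-α)) * w k := by
      intro k
      by_cases hk : k = 0
      · simp [hu, hwdef, hk]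
      · simp only [hu, hwdef, if_neg hk]
        rw [← mul_assoc, ← Real.rpow_add (abs_pos.mpr (Int.cast_ne_zero.mpr hk)),
          neg_add_cancel, Real.rpow_zero, one_mul]
    have husum : Summable u := (mySummable_mul_of_sq hAsum hwsum).congr fun k => (huw k).symm
    have husum' : Summable (fun k : ℤ => if k = 0 then 0 else ccoef f k) := by
      apply Summable.of_norm
      refine husum.congr fun k => ?_
      by_cases hk : k = 0 <;> simp [hu, hk]
    have hcsum : Summable (ccoef f) :=
      mySummable_update (fun k hk => (if_neg hk).symm) husum'
    have htsum0 := myPointwise hFc hF hf0 hcsum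
    have hmu : m ≤ ∑' k, u k := by
      have h2 : ccoef f 0 = ((m : ℝ) : ℂ) := by rw [myCoeff0 f]
      have hext := Summable.tsum_eq_add_tsum_ite hcsum 0
      rw [htsum0, h2] at hext
      have h1 : ((m : ℝ) : ℂ) = -∑' k : ℤ, (if k = 0 then 0 else ccoef f k) :=
        eq_neg_of_add_eq_zero_left hext.symm
      calc m = ‖((m : ℝ) : ℂ)‖ := by
            rw [Complex.norm_real, Real.norm_eq_abs, abs_of_pos hmpos]
        _ = ‖∑' k : ℤ, (if k = 0 then 0 else ccoef f k)‖ := by rw [h1, norm_neg]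
        _ ≤ ∑' k : ℤ, ‖(if k = 0 then 0 else ccoef f k)‖ :=
            norm_tsum_le_tsum_norm
              (husum.congr fun k => by by_cases hk : k = 0 <;> simp [hu, hk])
        _ = ∑' k, u k := tsum_congr fun k => by by_cases hk : k = 0 <;> simp [hu, hk]
    have hS1 : m ≤ Real.sqrt A * S := by
      refine hmu.trans ?_
      calc ∑' k, u k = ∑' k : ℤ, (if k = 0 then 0 else |(k : ℝ)| ^ (-α)) * w k := tsum_congr huw
        _ ≤ Real.sqrt (∑' k : ℤ, (if k = 0 then 0 else |(k : ℝ)| ^ (-α)) ^ 2) *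
            Real.sqrt (∑' k : ℤ, w k ^ 2) := myTsum_cs hAsum hwsum
        _ = Real.sqrt A * S := by rw [hAdef, hSdef]
    have husq : Summable fun k => u k ^ 2 := by
      refine Summable.of_nonneg_of_le (fun k => sq_nonneg _) (fun k => ?_) hwsum
      have hle : u k ≤ w k := by
        by_cases hk : k = 0
        · simp [hu, hwdef, hk]
        · simp only [hu, hwdef, if_neg hk]
          have h1k : (1:ℝ) ≤ |(k:ℝ)| := by
            rw [← Int.cast_abs]
            exact_mod_cast Int.one_le_abs hk
          have h2 : (1:ℝ) ≤ |(k:ℝ)| ^ α := by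
            calc (1:ℝ) = |(k:ℝ)| ^ (0:ℝ) := (Real.rpow_zero _).symm
              _ ≤ |(k:ℝ)| ^ α := Real.rpow_le_rpow_of_exponent_le h1k (by linarith)
          nlinarith [norm_nonneg (ccoef f k)]
      have hun : 0 ≤ u k := by by_cases hk : k = 0 <;> simp [hu, hk]
      exact pow_le_pow_left₀ hun hle 2
    have hgsum : Summable fun k => ‖fourierCoeff (fun z => F z - ((m:ℝ):ℂ)) k‖ ^ 2 :=
      mySummable_update (g := fun k => u k ^ 2)
        (fun k hk => by rw [myCoeffG hf hF m hk]; simp [hu, if_neg hk]) husq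
    have hB : ∑' k, u k ^ 2 < δ / (2 * π) := by
      have h1 : ∑' k, u k ^ 2 ≤ ∑' k, ‖fourierCoeff (fun z => F z - ((m:ℝ):ℂ)) k‖ ^ 2 := by
        refine Summable.tsum_le_tsum (fun k => ?_) husq hgsum
        by_cases hk : k = 0
        · simp only [hu, if_pos hk]
          simp only [ne_eq, zero_pow, OfNat.ofNat_ne_zero, not_false_eq_true]
          positivity
        · rw [myCoeffG hf hF m hk]
          simp [hu, if_neg hk]
      have h2 : ∑' k, ‖fourierCoeff (fun z => F z - ((m:ℝ):ℂ)) k‖ ^ 2 < δ / (2*π) := by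
        rw [myParseval hf hFc hF m, div_eq_inv_mul]
        exact mul_lt_mul_of_pos_left hosc (by positivity)
      linarith
    have hsplit : ∀ N : ℕ, 1 ≤ N →
        m ≤ Real.sqrt (2*N) * Real.sqrt (δ/(2*π)) + K * (N:ℝ) ^ ((1:ℝ)/2 - α) * S := by
      intro N hN
      set I : Finset ℤ := (Finset.Icc (-(N:ℤ)) (N:ℤ)).erase 0 with hI
      have hIcard : (I.card : ℝ) ≤ 2 * N := by
        have h0 : (0:ℤ) ∈ Finset.Icc (-(N:ℤ)) (N:ℤ) := by
          rw [Finset.mem_Icc]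
          omega
        rw [hI, Finset.card_erase_of_mem h0, Int.card_Icc]
        have he : ((N:ℤ) + 1 - -(N:ℤ)).toNat = 2*N + 1 := by omega
        rw [he]
        push_cast
        linarith
      have hfin : ∑ k ∈ I, u k ≤ Real.sqrt (2*N) * Real.sqrt (δ/(2*π)) := by
        have hcs := Real.sum_mul_le_sqrt_mul_sqrt I (fun _ => (1:ℝ)) u
        simp only [one_mul, one_pow] at hcs
        have hc1 : ∑ _k ∈ I, (1:ℝ) = (I.card : ℝ) := by simp
        rw [hc1] at hcs
        refine hcs.trans ?_
        have hsum_le : ∑ k ∈ I, u k ^ 2 ≤ δ/(2*π) :=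
          (Summable.sum_le_tsum I (fun k _ => sq_nonneg _) husq).trans hB.le
        gcongr
      set atl : ℤ → ℝ := fun k => if |k| ≤ (N:ℤ) then 0 else |(k:ℝ)| ^ (-α) with hatl
      have hatlsq_eq : ∀ k : ℤ, atl k ^ 2
          = (if |k| ≤ (N:ℤ) then 0 else |(k:ℝ)| ^ (-(2*α))) := by
        intro k
        simp only [hatl]
        split
        · norm_num
        · next hcond =>
          have hk0 : (k:ℝ) ≠ 0 := by
            refine Int.cast_ne_zero.mpr ?_
            intro h
            exact hcond (by simp [h])
          rw [← Real.rpow_natCast (|(k:ℝ)| ^ (-α)) 2, ← Real.rpow_mul (abs_nonneg _)]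
          congr 1
          push_cast
          ring
      have hatlsq : Summable fun k => atl k ^ 2 := by
        refine Summable.of_nonneg_of_le (fun k => sq_nonneg _) (fun k => ?_)
          (Real.summable_abs_int_rpow h2α)
        rw [hatlsq_eq]
        split
        · positivity
        · exact le_refl _
      have hatl_total : ∑' k : ℤ, atl k ^ 2 ≤ 2/(2*α-1) * (N:ℝ) ^ (1 - 2*α) := by
        have hnat := tsum_nat_add_neg hatlsq
        have h00 : atl (0:ℤ) ^ 2 = 0 := by
          simp [hatl]
        have heven : ∀ n : ℕ, atl (n:ℤ) ^ 2 + atl (-(n:ℤ)) ^ 2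
            = 2 * (if n ≤ N then 0 else ((n:ℝ)) ^ (-(2*α))) := by
          intro n
          by_cases hn : n ≤ N
          · have h1 : |(n:ℤ)| ≤ (N:ℤ) := by
              rw [abs_of_nonneg (Int.natCast_nonneg n)]
              exact_mod_cast hn
            have h2 : |(-(n:ℤ))| ≤ (N:ℤ) := by rwa [abs_neg]
            simp [hatl, h1, h2, hn]
          · have h1 : ¬(|(n:ℤ)| ≤ (N:ℤ)) := by
              rw [abs_of_nonneg (Int.natCast_nonneg n)]
              exact_mod_cast hn
            have h2 : ¬(|(-(n:ℤ))| ≤ (N:ℤ)) := by rwa [abs_neg]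
            simp only [hatl, if_neg h1, if_neg h2, if_neg hn]
            have e1 : |((-(n:ℤ) : ℤ) : ℝ)| = ((n:ℕ) : ℝ) := by
              push_cast
              rw [abs_neg, abs_of_nonneg (Nat.cast_nonneg n)]
            have e2 : |(((n:ℤ) : ℤ) : ℝ)| = ((n:ℕ) : ℝ) := by
              push_cast
              rw [abs_of_nonneg (Nat.cast_nonneg n)]
            rw [e1, e2]
            have hs : (((n:ℕ):ℝ) ^ (-α)) ^ 2 = ((n:ℕ):ℝ) ^ (-(2*α)) := by
              rw [← Real.rpow_natCast (((n:ℕ):ℝ) ^ (-α)) 2, ← Real.rpow_mul (Nat.cast_nonneg n)]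
              congr 1
              push_cast
              ring
            rw [hs]
            ring
        rw [tsum_congr heven, h00, add_zero] at hnat
        have hsum_ite : Summable fun n : ℕ => (if n ≤ N then 0 else ((n:ℝ)) ^ (-(2*α))) := by
          refine Summable.of_nonneg_of_le (fun n => ?_) (fun n => ?_)
            (Real.summable_nat_rpow.mpr (by linarith : -(2*α) < -1))
          · split
            · exact le_refl _
            · positivity
          · split
            · positivity
            · exact le_refl _
        rw [tsum_mul_left] at hnat
        have htail2 : ∑' n : ℕ, (if n ≤ N then 0 else ((n:ℝ)) ^ (-(2*α)))
            ≤ (N:ℝ)^(1-2*α)/(2*α-1) := by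
          have hdecomp := Summable.sum_add_tsum_nat_add
            (f := fun n : ℕ => (if n ≤ N then 0 else ((n:ℝ)) ^ (-(2*α)))) (N+1) hsum_ite
          have hzero : ∑ i ∈ Finset.range (N+1),
              (if i ≤ N then 0 else ((i:ℝ)) ^ (-(2*α))) = 0 := by
            apply Finset.sum_eq_zero
            intro i hi
            rw [if_pos (Nat.lt_succ_iff.mp (Finset.mem_range.mp hi))]
          rw [← hdecomp, hzero, zero_add]
          calc ∑' i : ℕ, (if i + (N+1) ≤ N then 0 else (((i + (N+1) : ℕ)):ℝ) ^ (-(2*α)))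
              = ∑' i : ℕ, ((i + (N+1) : ℕ) : ℝ) ^ (-(2*α)) :=
                tsum_congr fun i => by rw [if_neg (by omega)]
            _ ≤ (N:ℝ)^(1-2*α)/(2*α-1) := myTail (2*α) h2α N hN
        rw [← hnat]
        calc 2 * ∑' n : ℕ, (if n ≤ N then 0 else ((n:ℝ)) ^ (-(2*α)))
            ≤ 2 * ((N:ℝ)^(1-2*α)/(2*α-1)) := by linarith
          _ = 2/(2*α-1) * (N:ℝ)^(1-2*α) := by ring
      have hIs : ∑' k : (↑I : Set ℤ), u ↑k = ∑ k ∈ I, u k := Finset.tsum_subtype' I u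
      have hcompl := Summable.tsum_add_tsum_compl (s := (↑I : Set ℤ)) (husum.subtype _) (husum.subtype _)
      have hucomp : ∀ k : ((↑I : Set ℤ)ᶜ : Set ℤ), u ↑k = atl ↑k * w ↑k := by
        rintro ⟨k, hk⟩
        have hkI : k ∉ I := by simpa using hk
        by_cases hk0 : k = 0
        · simp [hu, hwdef, hk0]
        · have hgt : ¬ (|k| ≤ (N:ℤ)) := by
            intro habs
            apply hkI
            rw [hI, Finset.mem_erase]
            exact ⟨hk0, Finset.mem_Icc.mpr (abs_le.mp habs)⟩
          simp only [hu, hatl, hwdef, if_neg hk0, if_neg hgt]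
          rw [← mul_assoc, ← Real.rpow_add (abs_pos.mpr (Int.cast_ne_zero.mpr hk0)),
            neg_add_cancel, Real.rpow_zero, one_mul]
      have htailcs : ∑' k : ((↑I : Set ℤ)ᶜ : Set ℤ), u ↑k
          ≤ Real.sqrt (∑' k : ((↑I : Set ℤ)ᶜ : Set ℤ), atl ↑k ^ 2) *
            Real.sqrt (∑' k : ((↑I : Set ℤ)ᶜ : Set ℤ), w ↑k ^ 2) := by
        rw [tsum_congr hucomp]
        exact myTsum_cs (hatlsq.subtype _) (hwsum.subtype _)
      have hcompl_atl := Summable.tsum_add_tsum_compl (s := (↑I : Set ℤ))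
        (hatlsq.subtype _) (hatlsq.subtype _)
      have hcompl_w := Summable.tsum_add_tsum_compl (s := (↑I : Set ℤ))
        (hwsum.subtype _) (hwsum.subtype _)
      have hatl_sub_le : ∑' k : ((↑I : Set ℤ)ᶜ : Set ℤ), atl ↑k ^ 2
          ≤ 2/(2*α-1) * (N:ℝ)^(1-2*α) := by
        have hnn : 0 ≤ ∑' k : (↑I : Set ℤ), atl ↑k ^ 2 := tsum_nonneg fun k => sq_nonneg _
        linarith [hatl_total, hcompl_atl]
      have hw_sub_le : ∑' k : ((↑I : Set ℤ)ᶜ : Set ℤ), w ↑k ^ 2 ≤ ∑' k, w k ^ 2 := by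
        have hnn : 0 ≤ ∑' k : (↑I : Set ℤ), w ↑k ^ 2 := tsum_nonneg fun k => sq_nonneg _
        linarith [hcompl_w]
      have htail_final : ∑' k : ((↑I : Set ℤ)ᶜ : Set ℤ), u ↑k
          ≤ K * (N:ℝ)^((1:ℝ)/2-α) * S := by
        refine htailcs.trans ?_
        have hsq1 : Real.sqrt (∑' k : ((↑I : Set ℤ)ᶜ : Set ℤ), atl ↑k ^ 2)
            ≤ K * (N:ℝ)^((1:ℝ)/2-α) := by
          refine (Real.sqrt_le_sqrt hatl_sub_le).trans ?_
          rw [Real.sqrt_mul (le_of_lt (div_pos two_pos (by linarith : (0:ℝ) < 2*α-1))), hKdef]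
          have hNnn : (0:ℝ) ≤ (N:ℝ) := Nat.cast_nonneg N
          have he : Real.sqrt ((N:ℝ)^(1-2*α)) = (N:ℝ)^((1:ℝ)/2-α) := by
            rw [Real.sqrt_eq_rpow, ← Real.rpow_mul hNnn]
            congr 1
            ring
          rw [he]
        have hsq2 : Real.sqrt (∑' k : ((↑I : Set ℤ)ᶜ : Set ℤ), w ↑k ^ 2) ≤ S := by
          rw [hSdef]
          exact Real.sqrt_le_sqrt hw_sub_le
        exact mul_le_mul hsq1 hsq2 (Real.sqrt_nonneg _) (by positivity)
      refine hmu.trans ?_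
      rw [← hcompl, hIs]
      exact add_le_add hfin htail_final
    rcases le_or_gt δ δ₀ with hcase | hcase
    · set N : ℕ := ⌊c₀^2/(16*π*δ)⌋₊ with hNdef
      have hx2 : (2:ℝ) ≤ c₀^2/(16*π*δ) := by
        rw [le_div_iff₀ (by positivity)]
        rw [hδ₀def] at hcase
        have h := (le_div_iff₀ (by positivity : (0:ℝ) < 32*π)).mp hcase
        linarith
      have hN1 : 1 ≤ N := by
        apply Nat.le_floor
        push_cast
        linarith
      have hNpos : (0:ℝ) < N := by exact_mod_cast hN1
      have hNle : (N:ℝ) ≤ c₀^2/(16*π*δ) := Nat.floor_le (by positivity)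
      have hNge : δ₀/δ ≤ (N:ℝ) := by
        have h1 : c₀^2/(16*π*δ) - 1 < (N:ℝ) := Nat.sub_one_lt_floor _
        have h2 : δ₀/δ = c₀^2/(16*π*δ)/2 := by
          rw [hδ₀def]
          field_simp
          ring
        rw [h2]
        linarith
      have h1 := hsplit N hN1
      have hfirst : Real.sqrt (2*N) * Real.sqrt (δ/(2*π)) ≤ c₀/(4*π) := by
        rw [← Real.sqrt_mul (by positivity)]
        have harg : 2*N*(δ/(2*π)) ≤ (c₀/(4*π))^2 := by
          have h2 : (N:ℝ)*(16*π*δ) ≤ c₀^2 := (le_div_iff₀ (by positivity)).mp hNle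
          rw [show 2*(N:ℝ)*(δ/(2*π)) = (N:ℝ)*(16*π*δ)/(16*π^2) by field_simp,
            show (c₀/(4*π))^2 = c₀^2/(16*π^2) by rw [div_pow]; ring]
          gcongr
        calc Real.sqrt (2*N*(δ/(2*π))) ≤ Real.sqrt ((c₀/(4*π))^2) := Real.sqrt_le_sqrt harg
          _ = c₀/(4*π) := Real.sqrt_sq (by positivity)
      have h3 : c₀/(4*π) ≤ K * (N:ℝ)^((1:ℝ)/2-α) * S := by
        have hhalf : c₀/(2*π) - c₀/(4*π) = c₀/(4*π) := by
          field_simp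
          ring
        have h4 := hm.trans h1
        linarith
      have hNrp : (0:ℝ) < (N:ℝ)^(α - 1/2) := Real.rpow_pos_of_pos hNpos _
      have hPQ : (N:ℝ)^((1:ℝ)/2-α) * (N:ℝ)^(α-1/2) = 1 := by
        rw [← Real.rpow_add hNpos]
        norm_num
      have h4 : c₀/(4*π) * (N:ℝ)^(α-1/2) ≤ K * S := by
        have h5 := mul_le_mul_of_nonneg_right h3 hNrp.le
        calc c₀/(4*π) * (N:ℝ)^(α-1/2)
            ≤ K * (N:ℝ)^((1:ℝ)/2-α) * S * (N:ℝ)^(α-1/2) := h5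
          _ = K * S * ((N:ℝ)^((1:ℝ)/2-α) * (N:ℝ)^(α-1/2)) := by ring
          _ = K * S := by rw [hPQ, mul_one]
      have h6 : (δ₀/δ) ^ (α - 1/2) ≤ (N:ℝ)^(α-1/2) :=
        Real.rpow_le_rpow (by positivity) hNge (by linarith)
      have h7 : (δ₀/δ) ^ (α-1/2) = δ₀^(α-1/2) * δ^(1/2-α) := by
        rw [Real.div_rpow hδ₀pos.le hδ.le, div_eq_mul_inv, ← Real.rpow_neg hδ.le]
        congr 2
        ring
      have h8 : c₀/(4*π) * (N:ℝ)^(α-1/2) / K ≤ S := by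
        rw [div_le_iff₀ hKpos]
        linarith [h4]
      calc min c₁ c₂ * δ^(1/2-α) ≤ c₁ * δ^(1/2-α) :=
            mul_le_mul_of_nonneg_right (min_le_left _ _) (Real.rpow_nonneg hδ.le _)
        _ = c₀/(4*π*K) * (δ₀^(α-1/2) * δ^(1/2-α)) := by
            rw [hc₁def]
            ring
        _ = c₀/(4*π*K) * (δ₀/δ)^(α-1/2) := by rw [h7]
        _ ≤ c₀/(4*π*K) * (N:ℝ)^(α-1/2) := mul_le_mul_of_nonneg_left h6 (by positivity)
        _ = c₀/(4*π) * (N:ℝ)^(α-1/2) / K := by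
            rw [show (4*π*K) = (4*π)*K by ring, ← div_div]
            ring
        _ ≤ S := h8
    · have hS0 : c₀/(2*π*Real.sqrt A) ≤ S := by
        have h1 : c₀/(2*π) ≤ Real.sqrt A * S := hm.trans hS1
        rw [div_le_iff₀ (by positivity)]
        have h2 := (div_le_iff₀ (by positivity : (0:ℝ) < 2*π)).mp h1
        nlinarith [h2]
      have hδpow : δ ^ ((1:ℝ)/2 - α) ≤ δ₀ ^ ((1:ℝ)/2-α) :=
        Real.rpow_le_rpow_of_nonpos hδ₀pos hcase.le (by linarith)
      have hpow1 : δ₀^(α-1/2) * δ₀^((1:ℝ)/2-α) = 1 := by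
        rw [← Real.rpow_add hδ₀pos]
        norm_num
      calc min c₁ c₂ * δ^(1/2-α) ≤ c₂ * δ^(1/2-α) :=
            mul_le_mul_of_nonneg_right (min_le_right _ _) (Real.rpow_nonneg hδ.le _)
        _ ≤ c₂ * δ₀^((1:ℝ)/2-α) := mul_le_mul_of_nonneg_left hδpow hc₂.le
        _ = c₀/(2*π*Real.sqrt A) * (δ₀^(α-1/2) * δ₀^((1:ℝ)/2-α)) := by
            rw [hc₂def]
            ring
        _ = c₀/(2*π*Real.sqrt A) := by rw [hpow1, mul_one]
        _ ≤ S := hS0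
  have h2π1 : 1 ≤ Real.sqrt (2*π) := by
    rw [show (1:ℝ) = Real.sqrt 1 by simp]
    exact Real.sqrt_le_sqrt (by nlinarith [Real.pi_gt_three])
  calc min c₁ c₂ * δ ^ (1/2 - α) ≤ S := hreal
    _ = 1 * S := (one_mul S).symm
    _ ≤ Real.sqrt (2*π) * S := mul_le_mul_of_nonneg_right h2π1 hSnn
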